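/- arXiv:2012.15524 — 2 statements merged into one kernel-verified Lean document; each statement's English description precedes it below -/
import Mathlib

section
/- One-step induction for MinPop matching: define h(u,c) = g(u ++ [c]) and H(u,c) = G(u ++ [c]) for u on the trie. Then for any string w with last character c and prefix w' (so w = w' ++ [c]): if g(w') = none then g(w) = none and G(w) = G(w'); and if g(w') = some u, then g(w) = h(u,c) and G(w) = G(w') ++ H(u,c). -/
variable {α : Type*} [DecidableEq α]

/-- The longest nonempty prefix of `w` that belongs to `V` (or `[]` if none exists). -/
def maxPref (V : Finset (List α)) (w : List α) : List α :=
  ((w.inits.filter (fun p => decide (p ∈ V ∧ p ≠ []))).getLast?).getD []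

/-- The suffix `q_w` of `w` obtained by removing the prefix `p_w`. -/
def restSuffix (V : Finset (List α)) (w : List α) : List α :=
  w.drop (maxPref V w).length

/-- MaxMatch tokenization; `none` encodes the failure output `[UNK]`. -/
def maxMatch (V : Finset (List α)) (w : List α) : Option (List (List α)) :=
  if hw : w = [] then some []
  else if hp : maxPref V w = [] then none
  else
    match maxMatch V (w.drop (maxPref V w).length) with
    | none => none
    | some ts => some (maxPref V w :: ts)
  termination_by w.length
  decreasing_by
    simp only [List.length_drop]
    have h1 : 0 < (maxPref V w).length := List.length_pos_iff.mpr hp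
    have h2 : 0 < w.length := List.length_pos_iff.mpr hw
    omega

/-- `w` is "on the trie" built from `V`: it is `ε` or a prefix of a vocabulary token. -/
def OnTrie (V : Finset (List α)) (w : List α) : Prop :=
  w = [] ∨ ∃ t ∈ V, w <+: t

instance (V : Finset (List α)) (w : List α) : Decidable (OnTrie V w) := by
  unfold OnTrie; infer_instance

/-- MinPop matching: `(g w, G w)`. -/
def minPop (V : Finset (List α)) (w : List α) : Option (List α) × List (List α) :=
  if hT : OnTrie V w then (some w, [])
  else if hp : maxPref V w = [] then (none, [])
  else
    let r := minPop V (w.drop (maxPref V w).length)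
    (r.1, maxPref V w :: r.2)
  termination_by w.length
  decreasing_by
    simp only [List.length_drop]
    have hw : w ≠ [] := fun h => hT (Or.inl h)
    have h1 : 0 < (maxPref V w).length := List.length_pos_iff.mpr hp
    have h2 : 0 < w.length := List.length_pos_iff.mpr hw
    omega

/-- Failure link `f(u)`. -/
def fLink (V : Finset (List α)) (u : List α) : Option (List α) :=
  if maxPref V u = [] then none else (minPop V (restSuffix V u)).1

/-- Failure pops `F(u)`. -/
def fPops (V : Finset (List α)) (u : List α) : List (List α) :=
  if maxPref V u = [] then [] else maxPref V u :: (minPop V (restSuffix V u)).2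


lemma maxPref_mem_prefix (V : Finset (List α)) (w : List α) (h : maxPref V w ≠ []) :
    maxPref V w ∈ V ∧ maxPref V w <+: w := by
  rcases hl : (w.inits.filter (fun p => decide (p ∈ V ∧ p ≠ []))).getLast? with _ | p
  · exfalso; apply h; unfold maxPref; rw [hl]; rfl
  · obtain ⟨hne, heq⟩ := List.mem_getLast?_eq_getLast hl
    have hm : p ∈ w.inits.filter (fun p => decide (p ∈ V ∧ p ≠ [])) :=
      heq ▸ List.getLast_mem hne
    rw [List.mem_filter] at hm
    have hmp : maxPref V w = p := by unfold maxPref; rw [hl]; rfl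
    rw [hmp]
    have := hm.2
    simp only [decide_eq_true_eq] at this
    exact ⟨this.1, (List.mem_inits _ _).mp hm.1⟩

lemma not_onTrie_append (V : Finset (List α)) (w : List α) (c : α)
    (h : ¬ OnTrie V w) : ¬ OnTrie V (w ++ [c]) := by
  intro hc
  rcases hc with hc | ⟨t, ht, hp⟩
  · simp at hc
  · exact h (Or.inr ⟨t, ht, ((w.prefix_append [c]).trans hp)⟩)

lemma maxPref_append (V : Finset (List α)) (w : List α) (c : α)
    (h : ¬ OnTrie V w) : maxPref V (w ++ [c]) = maxPref V w := by
  have hnv : w ++ [c] ∉ V := by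
    intro hv
    exact h (Or.inr ⟨w ++ [c], hv, w.prefix_append [c]⟩)
  unfold maxPref
  rw [List.inits_append]
  simp only [List.inits, List.map_cons, List.map_nil]
  rw [List.filter_append]
  have h0 : List.filter (fun p => decide (p ∈ V ∧ p ≠ [])) [w ++ [c]] = [] := by
    simp [hnv]
  simp only [List.tail_cons, List.map_cons, List.map_nil] at h0 ⊢
  rw [h0, List.append_nil]

lemma stmt10_aux (V : Finset (List α)) (w' : List α) (c : α) :
    ((minPop V w').1 = none →
      (minPop V (w' ++ [c])).1 = none ∧
      (minPop V (w' ++ [c])).2 = (minPop V w').2) ∧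
    (∀ u, (minPop V w').1 = some u →
      (minPop V (w' ++ [c])).1 = (minPop V (u ++ [c])).1 ∧
      (minPop V (w' ++ [c])).2 = (minPop V w').2 ++ (minPop V (u ++ [c])).2) := by
  by_cases hT : OnTrie V w'
  · rw [minPop, dif_pos hT]
    refine ⟨by simp, fun u hu => ?_⟩
    simp only at hu
    obtain rfl : w' = u := Option.some.inj hu
    simp
  · have hT' := not_onTrie_append V w' c hT
    have hmp := maxPref_append V w' c hT
    by_cases hp : maxPref V w' = []
    · rw [minPop, dif_neg hT, dif_pos hp, minPop, dif_neg hT', dif_pos (hmp.trans hp)]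
      exact ⟨fun _ => ⟨rfl, rfl⟩, fun u hu => by simp at hu⟩
    · have hp' : maxPref V (w' ++ [c]) ≠ [] := by rw [hmp]; exact hp
      obtain ⟨_, hpre⟩ := maxPref_mem_prefix V w' hp
      have hlen : (maxPref V w').length ≤ w'.length := hpre.length_le
      have hdrop : (w' ++ [c]).drop (maxPref V (w' ++ [c])).length
          = w'.drop (maxPref V w').length ++ [c] := by
        rw [hmp, List.drop_append_of_le_length hlen]
      have hwne : w' ≠ [] := fun h => hT (Or.inl h)
      have hd : (w'.drop (maxPref V w').length).length < w'.length := by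
        simp only [List.length_drop]
        have h1 : 0 < (maxPref V w').length := List.length_pos_iff.mpr hp
        have h2 : 0 < w'.length := List.length_pos_iff.mpr hwne
        omega
      have IH := stmt10_aux V (w'.drop (maxPref V w').length) c
      have e1 : minPop V w' = ((minPop V (w'.drop (maxPref V w').length)).1,
          maxPref V w' :: (minPop V (w'.drop (maxPref V w').length)).2) := by
        rw [minPop, dif_neg hT, dif_neg hp]
      have e2 : minPop V (w' ++ [c]) =
          ((minPop V (w'.drop (maxPref V w').length ++ [c])).1,
          maxPref V w' :: (minPop V (w'.drop (maxPref V w').length ++ [c])).2) := by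
        rw [minPop, dif_neg hT', dif_neg hp', hdrop, hmp]
      rw [e1, e2]
      constructor
      · intro hnone
        simp only at hnone ⊢
        obtain ⟨h1, h2⟩ := IH.1 hnone
        exact ⟨h1, by rw [h2]⟩
      · intro u hu
        simp only at hu ⊢
        obtain ⟨h1, h2⟩ := IH.2 u hu
        exact ⟨h1, by rw [h2, List.cons_append]⟩
  termination_by w'.length
  decreasing_by exact hd

/-- one-step induction for MinPop matching, with
`h(u,c) = g(u ++ [c])` and `H(u,c) = G(u ++ [c])`: for `w = w' ++ [c]`,
if `g(w') = none` then `g(w) = none` and `G(w) = G(w')`; and if `g(w') = some u`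
then `g(w) = h(u,c)` and `G(w) = G(w') ++ H(u,c)`. -/
theorem stmt10 (V : Finset (List α)) (hV : ∀ t ∈ V, t ≠ [])
    (w' : List α) (c : α) :
    ((minPop V w').1 = none →
      (minPop V (w' ++ [c])).1 = none ∧
      (minPop V (w' ++ [c])).2 = (minPop V w').2) ∧
    (∀ u, (minPop V w').1 = some u →
      (minPop V (w' ++ [c])).1 = (minPop V (u ++ [c])).1 ∧
      (minPop V (w' ++ [c])).2 = (minPop V w').2 ++ (minPop V (u ++ [c])).2) :=
  stmt10_aux V w' c
end

section
/- Parent-based precomputation of failure data: let v = u ++ [c] be a node on the trie with parent u. If v ∈ V then f(v) = some ε (the root) and F(v) = [v]. If v ∉ V, then f(v) = h(f*(u), c) and F(v) = F(u) ++ H*(f(u), c), where h and H applied to a 'none' node yield none and [] respectively. -/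
variable {α : Type*} [DecidableEq α]

/-- `h` extended to the `none` node: `h(none, c) = none`. -/
def hOpt (V : Finset (List α)) : Option (List α) → α → Option (List α)
  | none, _ => none
  | some u, c => (minPop V (u ++ [c])).1

/-- `H` extended to the `none` node: `H(none, c) = []`. -/
def HOpt (V : Finset (List α)) : Option (List α) → α → List (List α)
  | none, _ => []
  | some u, c => (minPop V (u ++ [c])).2

lemma mem_onTrie {V : Finset (List α)} {t : List α} (ht : t ∈ V) : OnTrie V t :=
  Or.inr ⟨t, ht, List.prefix_refl t⟩

lemma inits_concat (w : List α) (c : α) : (w ++ [c]).inits = w.inits ++ [w ++ [c]] := by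
  induction w with
  | nil => simp
  | cons a l ih => simp [List.inits_cons, ih]

lemma maxPref_concat_not_mem {V : Finset (List α)} {w : List α} {c : α}
    (h : w ++ [c] ∉ V) : maxPref V (w ++ [c]) = maxPref V w := by
  unfold maxPref
  rw [inits_concat, List.filter_append]
  simp [h]

lemma maxPref_self {V : Finset (List α)} {w : List α} (hw : w ∈ V) (hne : w ≠ []) :
    maxPref V w = w := by
  obtain rfl | ⟨l, c, rfl⟩ := w.eq_nil_or_concat
  · exact absurd rfl hne
  · unfold maxPref
    rw [List.concat_eq_append] at hw ⊢
    rw [inits_concat, List.filter_append]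
    simp [hw]

lemma maxPref_prefix (V : Finset (List α)) (w : List α) : maxPref V w <+: w := by
  unfold maxPref
  cases h : (w.inits.filter (fun p => decide (p ∈ V ∧ p ≠ []))).getLast? with
  | none => simp
  | some p =>
    have hp : p ∈ w.inits.filter (fun p => decide (p ∈ V ∧ p ≠ [])) := by
      obtain ⟨hne, hpe⟩ := List.mem_getLast?_eq_getLast (Option.mem_def.mpr h)
      rw [hpe]
      exact List.getLast_mem hne
    have := List.mem_filter.mp hp
    simpa using (List.mem_inits _ _).mp this.1

lemma minPop_concat_aux (V : Finset (List α)) (c : α) :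
    ∀ n (w : List α), w.length = n →
    (minPop V (w ++ [c])).1 = hOpt V (minPop V w).1 c ∧
    (minPop V (w ++ [c])).2 = (minPop V w).2 ++ HOpt V (minPop V w).1 c := by
  intro n
  induction n using Nat.strong_induction_on with
  | _ n ih =>
  intro w hn
  by_cases hT : OnTrie V w
  · have hw : minPop V w = (some w, []) := by rw [minPop]; simp [hT]
    rw [hw]
    simp [hOpt, HOpt]
  · have hwne : w ≠ [] := fun h => hT (Or.inl h)
    have hTc : ¬ OnTrie V (w ++ [c]) := by
      rintro (h | ⟨t, ht, hpre⟩)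
      · simp at h
      · exact hT (Or.inr ⟨t, ht, (List.prefix_append w [c]).trans hpre⟩)
    have hnv : w ++ [c] ∉ V := fun h => hTc (mem_onTrie h)
    have hmp : maxPref V (w ++ [c]) = maxPref V w := maxPref_concat_not_mem hnv
    by_cases hp : maxPref V w = []
    · have hw : minPop V w = (none, []) := by rw [minPop]; simp [hT, hp]
      have hw' : minPop V (w ++ [c]) = (none, []) := by
        rw [minPop]; simp [hTc, hmp, hp]
      rw [hw, hw']
      simp [hOpt, HOpt]
    · have hlen : (maxPref V w).length ≤ w.length := (maxPref_prefix V w).length_le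
      have hdrop : (w ++ [c]).drop (maxPref V w).length
          = w.drop (maxPref V w).length ++ [c] :=
        List.drop_append_of_le_length hlen
      have hlt : (w.drop (maxPref V w).length).length < n := by
        subst hn
        simp only [List.length_drop]
        have h1 := List.length_pos_iff.mpr hp
        have h2 := List.length_pos_iff.mpr hwne
        omega
      obtain ⟨IH1, IH2⟩ := ih _ hlt (w.drop (maxPref V w).length) rfl
      have hw : minPop V w
          = ((minPop V (w.drop (maxPref V w).length)).1,
             maxPref V w :: (minPop V (w.drop (maxPref V w).length)).2) := by
        rw [minPop]; simp [hT, hp]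
      have hwc : minPop V (w ++ [c])
          = ((minPop V (w.drop (maxPref V w).length ++ [c])).1,
             maxPref V w :: (minPop V (w.drop (maxPref V w).length ++ [c])).2) := by
        rw [minPop]; simp [hTc, hmp, hp, hdrop]
      rw [hw, hwc, IH1, IH2]
      exact ⟨rfl, by simp⟩

lemma minPop_concat (V : Finset (List α)) (c : α) (w : List α) :
    (minPop V (w ++ [c])).1 = hOpt V (minPop V w).1 c ∧
    (minPop V (w ++ [c])).2 = (minPop V w).2 ++ HOpt V (minPop V w).1 c :=
  minPop_concat_aux V c w.length w rfl

/-- parent-based precomputation of the failure data for a node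
`v = u ++ [c]` on the trie: if `v ∈ V` then `f(v) = some ε` and `F(v) = [v]`;
if `v ∉ V` then `f(v) = h(f(u), c)` and `F(v) = F(u) ++ H(f(u), c)`. -/
theorem stmt12 (V : Finset (List α)) (hV : ∀ t ∈ V, t ≠ [])
    (u : List α) (c : α) (hT : OnTrie V (u ++ [c])) :
    (u ++ [c] ∈ V →
      fLink V (u ++ [c]) = some [] ∧ fPops V (u ++ [c]) = [u ++ [c]]) ∧
    (u ++ [c] ∉ V →
      fLink V (u ++ [c]) = hOpt V (fLink V u) c ∧
      fPops V (u ++ [c]) = fPops V u ++ HOpt V (fLink V u) c) := by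
  constructor
  · intro hv
    have hne : u ++ [c] ≠ [] := by simp
    have hmp := maxPref_self hv hne
    have hrest : restSuffix V (u ++ [c]) = [] := by
      unfold restSuffix; rw [hmp]; simp
    have hnil : minPop V ([] : List α) = (some [], []) := by
      rw [minPop]; simp [OnTrie]
    constructor
    · unfold fLink
      rw [hmp, if_neg hne, hrest, hnil]
    · unfold fPops
      rw [hmp, if_neg hne, hrest, hnil]
  · intro hv
    have hmp := maxPref_concat_not_mem hv
    by_cases hp : maxPref V u = []
    · have hfl : fLink V u = none := by unfold fLink; rw [if_pos hp]
      constructor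
      · unfold fLink
        rw [hmp]
        simp [hp, hOpt]
      · unfold fPops
        rw [hmp]
        simp [hp, fLink, HOpt]
    · have hlen : (maxPref V u).length ≤ u.length := (maxPref_prefix V u).length_le
      have hdrop : restSuffix V (u ++ [c]) = restSuffix V u ++ [c] := by
        unfold restSuffix
        rw [hmp]
        exact List.drop_append_of_le_length hlen
      obtain ⟨A1, A2⟩ := minPop_concat V c (restSuffix V u)
      have hfl : fLink V u = (minPop V (restSuffix V u)).1 := by
        unfold fLink; rw [if_neg hp]
      constructor
      · unfold fLink
        rw [hmp, if_neg hp, if_neg hp, hdrop, A1]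
      · unfold fPops
        rw [hmp, if_neg hp, if_neg hp, hdrop, A2, hfl]
        simp
end
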